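/- For any graph G, the Mycielskian M(G) satisfies χ(M(G)) = χ(G) + 1, provided G has at least one edge. -/

import Mathlib

/-- A finite graph in the sense of the paper: a symmetric adjacency relation,
loops are allowed. -/
structure Graph' (V : Type) where
  Adj : V → V → Prop
  symm : ∀ {u v}, Adj u v → Adj v u

namespace Graph'

variable {α β : Type}

/-- The complete graph `K_m` on vertex set `Fin m`. -/
def completeG (m : ℕ) : Graph' (Fin m) :=
  ⟨fun i j => i ≠ j, fun h => h.symm⟩

/-- `f` is a graph homomorphism from `G` to `H`. -/
def IsHom (G : Graph' α) (H : Graph' β) (f : α → β) : Prop :=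
  ∀ ⦃u v⦄, G.Adj u v → H.Adj (f u) (f v)

/-- `G` admits a proper coloring with `n` colors. -/
def Colorable (G : Graph' α) (n : ℕ) : Prop :=
  ∃ f : α → Fin n, G.IsHom (completeG n) f

/-- The chromatic number of `G`, as an extended natural number. -/
noncomputable def chromNum (G : Graph' α) : ℕ∞ :=
  sInf ((fun k : ℕ => (k : ℕ∞)) '' {k | G.Colorable k})

/-- The neighborhood of a vertex. -/
def neighborSet (G : Graph' α) (v : α) : Set α := {w | G.Adj v w}

/-- The categorical product `G × H`. -/
def tensor (G : Graph' α) (H : Graph' β) : Graph' (α × β) :=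
  ⟨fun p q => G.Adj p.1 q.1 ∧ H.Adj p.2 q.2, fun h => ⟨G.symm h.1, H.symm h.2⟩⟩

/-- The exponential graph `K_m^G`: vertices are all set maps `V(G) → [m]`,
and `f` is adjacent to `g` iff `f u ≠ g v` for every edge `(u,v)` of `G`
(loops are allowed). -/
def expG (G : Graph' α) (m : ℕ) : Graph' (α → Fin m) :=
  ⟨fun f g => ∀ u v, G.Adj u v → f u ≠ g v,
   fun {f g} h u v huv e => h v u (G.symm huv) e.symm⟩

/-- `G` is connected: nonempty and any two vertices are joined by a walk. -/
def Connected (G : Graph' α) : Prop :=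
  Nonempty α ∧ ∀ u v : α, Relation.ReflTransGen G.Adj u v

/-- Property `P` of the paper: `G` is simple, and for any two disjoint edges
`(v1,w1)` and `(v2,w2)`, if `(v2,v1)` is an edge then `(w2,v1)` or `(w2,w1)`
is an edge. -/
def PropertyP (G : Graph' α) : Prop :=
  (∀ v, ¬ G.Adj v v) ∧
  ∀ ⦃v1 w1 v2 w2 : α⦄, G.Adj v1 w1 → G.Adj v2 w2 →
    v1 ≠ v2 → v1 ≠ w2 → w1 ≠ v2 → w1 ≠ w2 →
    G.Adj v2 v1 → (G.Adj w2 v1 ∨ G.Adj w2 w1)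

/-- Base (unsymmetrized) relation for the Mycielskian:
level-0 copies are adjacent as in `G`, a level-1 vertex is adjacent to the
level-0 copies of the neighbours of its shadow, and the apex `none` is
adjacent to all level-1 vertices. -/
def mycRel (G : Graph' α) : Option (α × Bool) → Option (α × Bool) → Prop
  | some (a, false), some (b, false) => G.Adj a b
  | some (a, true), some (b, false) => G.Adj a b
  | none, some (_, true) => True
  | _, _ => False

/-- The Mycielskian `M(G)`. -/
def myc (G : Graph' α) : Graph' (Option (α × Bool)) :=
  ⟨fun u v => G.mycRel u v ∨ G.mycRel v u, fun h => h.symm⟩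

/-- The double Mycielskian `M(M(K_n))`. -/
def MMK (n : ℕ) : Graph' (Option (Option (Fin n × Bool) × Bool)) :=
  myc (myc (completeG n))

/-- The vertex `(x, i, j)` of `M(M(K_n))`. -/
def vtx {n : ℕ} (x : Fin n) (i j : Bool) : Option (Option (Fin n × Bool) × Bool) :=
  some (some (x, i), j)

/-- The vertex `w_i = (*, i)` of `M(M(K_n))` for `i ∈ {0,1}`. -/
def wv (n : ℕ) (i : Bool) : Option (Option (Fin n × Bool) × Bool) :=
  some (none, i)

/-- The apex vertex `w_2` of `M(M(K_n))`. -/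
def w2 (n : ℕ) : Option (Option (Fin n × Bool) × Bool) := none

end Graph'


namespace Graph

open Graph'

lemma myc_colorable_succ {α : Type} (G : Graph' α) {n : ℕ} (h : G.Colorable n) :
    (myc G).Colorable (n + 1) := by
  obtain ⟨f, hf⟩ := h
  refine ⟨fun v => match v with
    | none => Fin.last n
    | some (a, _) => (f a).castSucc, ?_⟩
  rintro (_ | ⟨a, (_ | _)⟩) (_ | ⟨b, (_ | _)⟩) huv <;>
    simp only [myc, mycRel, or_false, false_or, or_self] at huv <;>
    try exact huv.elim
  · exact fun e => (Fin.castSucc_lt_last (f b)).ne' e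
  · exact fun e => huv.elim (fun h' => hf h' (Fin.castSucc_inj.mp e))
      (fun h' => hf h' (Fin.castSucc_inj.mp e).symm)
  · exact fun e => hf huv (Fin.castSucc_inj.mp e).symm
  · exact fun e => (Fin.castSucc_lt_last (f a)).ne e
  · exact fun e => hf huv (Fin.castSucc_inj.mp e)

lemma colorable_of_myc {α : Type} (G : Graph' α) {n : ℕ}
    (h : (myc G).Colorable (n + 1)) : G.Colorable n := by
  obtain ⟨c, hc⟩ := h
  classical
  set p := c none with hp
  have key : ∀ x : α, ∃ i : Fin n, p.succAbove i =
      (if c (some (x, false)) = p then c (some (x, true))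
        else c (some (x, false))) := by
    intro x
    apply Fin.exists_succAbove_eq
    split_ifs with hx
    · intro e
      exact hc (u := none) (v := some (x, true)) (Or.inl trivial) e.symm
    · exact hx
  choose g hg using key
  refine ⟨g, ?_⟩
  intro u v huv hguv
  have hsucc : (if c (some (u, false)) = p then c (some (u, true))
        else c (some (u, false)))
      = (if c (some (v, false)) = p then c (some (v, true))
        else c (some (v, false))) := by
    rw [← hg u, ← hg v, hguv]
  have e00 : (myc G).Adj (some (u, false)) (some (v, false)) := Or.inl huv
  have e10 : (myc G).Adj (some (u, true)) (some (v, false)) := Or.inl huv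
  have e01 : (myc G).Adj (some (u, false)) (some (v, true)) :=
    Or.inr (G.symm huv)
  by_cases h1 : c (some (u, false)) = p <;> by_cases h2 : c (some (v, false)) = p <;>
    simp only [h1, h2, if_pos, if_neg, if_true, if_false] at hsucc
  · exact hc e00 (h1.trans h2.symm)
  · exact hc e10 hsucc
  · exact hc e01 hsucc
  · exact hc e00 hsucc

/-- For any finite graph `G` with at least one edge,
`χ(M(G)) = χ(G) + 1`. -/
theorem chromNum_myc {α : Type} [Fintype α] (G : Graph' α)
    (hedge : ∃ u v, G.Adj u v) :
    (myc G).chromNum = G.chromNum + 1 := by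
  classical
  by_cases hA : ∃ k, G.Colorable k
  · have hB : ∃ k, (myc G).Colorable k :=
      ⟨Nat.find hA + 1, myc_colorable_succ G (Nat.find_spec hA)⟩
    have hGa : G.chromNum = (Nat.find hA : ℕ∞) := by
      apply le_antisymm
      · exact sInf_le ⟨_, Nat.find_spec hA, rfl⟩
      · apply le_sInf
        rintro x ⟨k, hk, rfl⟩
        exact Nat.cast_le.mpr (Nat.find_min' hA hk)
    have hMb : (myc G).chromNum = (Nat.find hB : ℕ∞) := by
      apply le_antisymm
      · exact sInf_le ⟨_, Nat.find_spec hB, rfl⟩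
      · apply le_sInf
        rintro x ⟨k, hk, rfl⟩
        exact Nat.cast_le.mpr (Nat.find_min' hB hk)
    have hb1 : 1 ≤ Nat.find hB := by
      rcases Nat.eq_zero_or_pos (Nat.find hB) with h0 | h0
      · obtain ⟨f, -⟩ := Nat.find_spec hB
        rw [h0] at f
        exact (f none).elim0
      · exact h0
    have hbeq : Nat.find hB = Nat.find hA + 1 := by
      apply le_antisymm
      · exact Nat.find_min' hB (myc_colorable_succ G (Nat.find_spec hA))
      · obtain ⟨m, hm⟩ := Nat.exists_eq_add_of_le hb1
        have : (myc G).Colorable (m + 1) := by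
          have := Nat.find_spec hB
          rwa [hm, Nat.add_comm] at this
        have hGm : G.Colorable m := colorable_of_myc G this
        have : Nat.find hA ≤ m := Nat.find_min' hA hGm
        omega
    rw [hGa, hMb, hbeq]
    push_cast
    ring
  · have hBempty : ∀ k, ¬ (myc G).Colorable k := by
      intro k hk
      rcases Nat.eq_zero_or_pos k with h0 | h0
      · obtain ⟨f, -⟩ := hk
        rw [h0] at f
        exact (f none).elim0
      · obtain ⟨m, hm⟩ := Nat.exists_eq_add_of_le h0
        rw [hm, Nat.add_comm] at hk
        exact hA ⟨m, colorable_of_myc G hk⟩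
    have h1 : G.chromNum = ⊤ := by
      rw [chromNum]
      convert sInf_empty
      · rfl
      simp only [Set.image_eq_empty]
      ext k
      simp only [Set.mem_setOf_eq, Set.mem_empty_iff_false, iff_false]
      exact fun hk => hA ⟨k, hk⟩
    have h2 : (myc G).chromNum = ⊤ := by
      rw [chromNum]
      convert sInf_empty
      · rfl
      simp only [Set.image_eq_empty]
      ext k
      simp only [Set.mem_setOf_eq, Set.mem_empty_iff_false, iff_false]
      exact hBempty k
    rw [h1, h2]
    simp

end Graph
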